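/- In a cOMARS design with 4n + n₀ runs built from two parent DSDs (foldovers of n×m conference designs, m > 4) and n₀ center runs, the absolute correlation between the quadratic-effect column of factor i and the two-factor interaction column of two other distinct factors j, k (with i ∉ {j,k}) takes one of exactly two values: sqrt((4n + n₀)/((n₀+4)(n−1)(n−2))) or 0. -/
import Mathlib


open Finset Filter

/-- A conference design: mutually orthogonal columns, exactly one zero per column,
at most one zero per row, and ±1 entries elsewhere. -/
def IsConferenceDesign {n m : ℕ} (C : Matrix (Fin n) (Fin m) ℝ) : Prop :=
  (∀ i j : Fin m, i ≠ j → ∑ r, C r i * C r j = 0) ∧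
  (∀ j : Fin m, ∃! r : Fin n, C r j = 0) ∧
  (∀ r : Fin n, ∀ i j : Fin m, C r i = 0 → C r j = 0 → i = j) ∧
  (∀ r : Fin n, ∀ j : Fin m, C r j = 0 ∨ C r j = 1 ∨ C r j = -1)

/-- The foldover [C; -C] of a matrix C. -/
def foldover {n m : ℕ} (C : Matrix (Fin n) (Fin m) ℝ) :
    Matrix (Fin n ⊕ Fin n) (Fin m) ℝ :=
  fun r j => match r with
    | .inl a => C a j
    | .inr a => -C a j

/-- A cOMARS design: two stacked parent DSDs (foldovers) plus n₀ center runs. -/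
def cOMARS {n m : ℕ} (C₁ C₂ : Matrix (Fin n) (Fin m) ℝ) (n₀ : ℕ) :
    Matrix (((Fin n ⊕ Fin n) ⊕ (Fin n ⊕ Fin n)) ⊕ Fin n₀) (Fin m) ℝ :=
  fun r j => match r with
    | .inl (.inl a) => foldover C₁ a j
    | .inl (.inr a) => foldover C₂ a j
    | .inr _ => 0

/-- Pearson correlation of two columns of a model matrix. -/
noncomputable def pearson {ι : Type*} [Fintype ι] (u v : ι → ℝ) : ℝ :=
  (∑ r, u r * v r - (∑ r, u r) * (∑ r, v r) / (Fintype.card ι)) /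
    (Real.sqrt (∑ r, u r ^ 2 - (∑ r, u r) ^ 2 / (Fintype.card ι)) *
     Real.sqrt (∑ r, v r ^ 2 - (∑ r, v r) ^ 2 / (Fintype.card ι)))

section helpers
variable {n m : ℕ} {C : Matrix (Fin n) (Fin m) ℝ}

lemma conf_sq (h : IsConferenceDesign C) (i : Fin m) {r₀ : Fin n} (h0 : C r₀ i = 0)
    (r : Fin n) : C r i ^ 2 = if r = r₀ then 0 else 1 := by
  obtain ⟨s, hs, hu⟩ := h.2.1 i
  by_cases hr : r = r₀
  · simp [hr, h0]
  · rcases h.2.2.2 r i with h1 | h1 | h1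
    · exact absurd ((hu r h1).trans (hu r₀ h0).symm) hr
    · simp [h1, hr]
    · simp [h1, hr]

lemma conf_sum_sq (h : IsConferenceDesign C) (i : Fin m) {r₀ : Fin n} (h0 : C r₀ i = 0) :
    ∑ r, C r i ^ 2 = (n : ℝ) - 1 := by
  rw [Finset.sum_congr rfl fun r _ => conf_sq h i h0 r]
  have h : ∀ r : Fin n, (if r = r₀ then (0:ℝ) else 1) = 1 - (if r = r₀ then 1 else 0) := by
    intro r; split <;> ring
  rw [Finset.sum_congr rfl fun r _ => h r, Finset.sum_sub_distrib]
  simp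

lemma conf_sum_prod_sq (h : IsConferenceDesign C) {j k : Fin m} (hjk : j ≠ k)
    {s t : Fin n} (hs : C s j = 0) (ht : C t k = 0) :
    ∑ r, C r j ^ 2 * C r k ^ 2 = (n : ℝ) - 2 := by
  have hst : s ≠ t := fun hq => hjk (h.2.2.1 s j k hs (hq ▸ ht))
  have key : ∀ r : Fin n, C r j ^ 2 * C r k ^ 2
      = 1 - (if r = s then 1 else 0) - (if r = t then 1 else 0) := by
    intro r
    rw [conf_sq h j hs r, conf_sq h k ht r]
    by_cases h1 : r = s <;> by_cases h2 : r = t <;> simp_all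
  rw [Finset.sum_congr rfl fun r _ => key r]
  simp [Finset.sum_sub_distrib]
  ring

lemma conf_sum_uv (h : IsConferenceDesign C) {i j k : Fin m} (hjk : j ≠ k)
    {r₀ : Fin n} (h0 : C r₀ i = 0) :
    ∑ r, C r i ^ 2 * (C r j * C r k) = -(C r₀ j * C r₀ k) := by
  have key : ∀ r : Fin n, C r i ^ 2 * (C r j * C r k)
      = C r j * C r k - (if r = r₀ then C r₀ j * C r₀ k else 0) := by
    intro r
    rw [conf_sq h i h0 r]
    by_cases h1 : r = r₀ <;> simp [h1]
  rw [Finset.sum_congr rfl fun r _ => key r, Finset.sum_sub_distrib, h.1 j k hjk]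
  simp

lemma conf_unit (h : IsConferenceDesign C) {i j k : Fin m} (hij : i ≠ j) (hik : i ≠ k)
    {r₀ : Fin n} (h0 : C r₀ i = 0) :
    C r₀ j * C r₀ k = 1 ∨ C r₀ j * C r₀ k = -1 := by
  have hj : C r₀ j ≠ 0 := fun hq => hij (h.2.2.1 r₀ i j h0 hq)
  have hk : C r₀ k ≠ 0 := fun hq => hik (h.2.2.1 r₀ i k h0 hq)
  rcases h.2.2.2 r₀ j with hJ | hJ | hJ <;> rcases h.2.2.2 r₀ k with hK | hK | hK <;>
    simp_all

lemma conf_card_le (h : IsConferenceDesign C) : m ≤ n := by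
  classical
  have hf : Function.Injective (fun c : Fin m => (h.2.1 c).choose) := by
    intro a b hab
    have hab' : (h.2.1 a).choose = (h.2.1 b).choose := hab
    have hb := (h.2.1 b).choose_spec.1
    rw [← hab'] at hb
    exact h.2.2.1 _ a b (h.2.1 a).choose_spec.1 hb
  simpa using Fintype.card_le_of_injective _ hf

end helpers

set_option maxHeartbeats 1000000 in
theorem stmt_9 {n m n₀ : ℕ} (C₁ C₂ : Matrix (Fin n) (Fin m) ℝ)
    (h₁ : IsConferenceDesign C₁) (h₂ : IsConferenceDesign C₂) (hm : 4 < m)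
    (i j k : Fin m) (hij : i ≠ j) (hik : i ≠ k) (hjk : j ≠ k) :
    |pearson (fun r => (cOMARS C₁ C₂ n₀ r i) ^ 2)
        (fun r => cOMARS C₁ C₂ n₀ r j * cOMARS C₁ C₂ n₀ r k)|
      = Real.sqrt ((4 * (n : ℝ) + (n₀ : ℝ)) /
          (((n₀ : ℝ) + 4) * ((n : ℝ) - 1) * ((n : ℝ) - 2))) ∨
    |pearson (fun r => (cOMARS C₁ C₂ n₀ r i) ^ 2)
        (fun r => cOMARS C₁ C₂ n₀ r j * cOMARS C₁ C₂ n₀ r k)| = 0 := by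
  classical
  obtain ⟨r₁, h1i, _⟩ := h₁.2.1 i
  obtain ⟨r₂, h2i, _⟩ := h₂.2.1 i
  obtain ⟨s₁, h1j, _⟩ := h₁.2.1 j
  obtain ⟨t₁, h1k, _⟩ := h₁.2.1 k
  obtain ⟨s₂, h2j, _⟩ := h₂.2.1 j
  obtain ⟨t₂, h2k, _⟩ := h₂.2.1 k
  have hn5 : 5 ≤ n := le_trans hm (conf_card_le h₁)
  have hnR : (5:ℝ) ≤ (n:ℝ) := by exact_mod_cast hn5
  set N : ℝ := 4 * (n:ℝ) + (n₀:ℝ) with hN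
  have hn₀ : (0:ℝ) ≤ (n₀:ℝ) := Nat.cast_nonneg _
  have hNpos : 0 < N := by rw [hN]; linarith
  have hcard : ((Fintype.card (((Fin n ⊕ Fin n) ⊕ (Fin n ⊕ Fin n)) ⊕ Fin n₀)) : ℝ) = N := by
    simp [hN]; ring
  set u : ((Fin n ⊕ Fin n) ⊕ (Fin n ⊕ Fin n)) ⊕ Fin n₀ → ℝ :=
    fun r => (cOMARS C₁ C₂ n₀ r i) ^ 2 with hu
  set v : ((Fin n ⊕ Fin n) ⊕ (Fin n ⊕ Fin n)) ⊕ Fin n₀ → ℝ :=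
    fun r => cOMARS C₁ C₂ n₀ r j * cOMARS C₁ C₂ n₀ r k with hv
  have hSu : ∑ r, u r = 4 * ((n:ℝ) - 1) := by
    simp only [hu, Fintype.sum_sum_type, cOMARS, foldover, neg_sq, Finset.sum_const,
      Finset.card_univ]
    rw [conf_sum_sq h₁ i h1i, conf_sum_sq h₂ i h2i]
    simp; ring
  have hSu2 : ∑ r, u r ^ 2 = 4 * ((n:ℝ) - 1) := by
    rw [← hSu]
    apply Finset.sum_congr rfl
    intro r _
    simp only [hu]
    rcases r with (a | a) | a
    · rcases a with a | a <;>
      · rcases h₁.2.2.2 a i with hq | hq | hq <;> simp [cOMARS, foldover, hq]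
    · rcases a with a | a <;>
      · rcases h₂.2.2.2 a i with hq | hq | hq <;> simp [cOMARS, foldover, hq]
    · simp [cOMARS]
  have hSv : ∑ r, v r = 0 := by
    simp only [hv, Fintype.sum_sum_type, cOMARS, foldover, neg_mul_neg]
    rw [h₁.1 j k hjk, h₂.1 j k hjk]
    simp
  have hSv2 : ∑ r, v r ^ 2 = 4 * ((n:ℝ) - 2) := by
    simp only [hv, Fintype.sum_sum_type, cOMARS, foldover, mul_pow, neg_sq]
    rw [conf_sum_prod_sq h₁ hjk h1j h1k, conf_sum_prod_sq h₂ hjk h2j h2k]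
    simp; ring
  set a : ℝ := C₁ r₁ j * C₁ r₁ k with ha
  set b : ℝ := C₂ r₂ j * C₂ r₂ k with hb
  have hSuv : ∑ r, u r * v r = -2 * (a + b) := by
    simp only [hu, hv, Fintype.sum_sum_type, cOMARS, foldover, neg_sq, neg_mul_neg]
    rw [conf_sum_uv h₁ hjk h1i, conf_sum_uv h₂ hjk h2i]
    simp [ha, hb]; ring
  have hA : ∑ r, u r ^ 2 - (∑ r, u r) ^ 2 / ((Fintype.card (((Fin n ⊕ Fin n) ⊕ (Fin n ⊕ Fin n)) ⊕ Fin n₀)) : ℝ)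
      = 4 * ((n:ℝ) - 1) * ((n₀:ℝ) + 4) / N := by
    rw [hSu, hSu2, hcard, hN]
    have hNe : 4 * (n:ℝ) + (n₀:ℝ) ≠ 0 := by linarith
    field_simp
    ring
  have hB : ∑ r, v r ^ 2 - (∑ r, v r) ^ 2 / ((Fintype.card (((Fin n ⊕ Fin n) ⊕ (Fin n ⊕ Fin n)) ⊕ Fin n₀)) : ℝ)
      = 4 * ((n:ℝ) - 2) := by
    rw [hSv, hSv2]; simp
  have hnum : ∑ r, u r * v r - (∑ r, u r) * (∑ r, v r) / ((Fintype.card (((Fin n ⊕ Fin n) ⊕ (Fin n ⊕ Fin n)) ⊕ Fin n₀)) : ℝ)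
      = -2 * (a + b) := by
    rw [hSuv, hSv, hSu]; simp
  have hP : pearson u v = (-2 * (a + b)) /
      (Real.sqrt (4 * ((n:ℝ) - 1) * ((n₀:ℝ) + 4) / N) * Real.sqrt (4 * ((n:ℝ) - 2))) := by
    rw [pearson, hnum, hA, hB]
  have haU := conf_unit h₁ hij hik h1i
  have hbU := conf_unit h₂ hij hik h2i
  rw [← ha] at haU; rw [← hb] at hbU
  have h1pos : (0:ℝ) < (n:ℝ) - 1 := by linarith
  have h2pos : (0:ℝ) < (n:ℝ) - 2 := by linarith
  have h0pos : (0:ℝ) < (n₀:ℝ) + 4 := by linarith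
  have hcase : a + b = 0 ∨ |(-2 : ℝ) * (a + b)| = 4 := by
    rcases haU with h | h <;> rcases hbU with h' | h' <;> rw [h, h'] <;> norm_num
  rcases hcase with hz | h4
  · right
    rw [hP, hz]
    simp
  · left
    have hApos : (0:ℝ) < 4 * ((n:ℝ) - 1) * ((n₀:ℝ) + 4) / N :=
      div_pos (mul_pos (by linarith) h0pos) hNpos
    have hBpos : (0:ℝ) < 4 * ((n:ℝ) - 2) := by linarith
    have hD : Real.sqrt (4 * ((n:ℝ) - 1) * ((n₀:ℝ) + 4) / N) * Real.sqrt (4 * ((n:ℝ) - 2))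
        = Real.sqrt (4 * ((n:ℝ) - 1) * ((n₀:ℝ) + 4) / N * (4 * ((n:ℝ) - 2))) := by
      rw [Real.sqrt_mul hApos.le]
    have hDpos : (0:ℝ) < Real.sqrt (4 * ((n:ℝ) - 1) * ((n₀:ℝ) + 4) / N * (4 * ((n:ℝ) - 2))) :=
      Real.sqrt_pos.mpr (mul_pos hApos hBpos)
    rw [hP, hD, abs_div, h4, abs_of_pos hDpos]
    have hTnn : (0:ℝ) ≤ N / (((n₀:ℝ) + 4) * ((n:ℝ) - 1) * ((n:ℝ) - 2)) :=
      le_of_lt (div_pos hNpos (mul_pos (mul_pos h0pos h1pos) h2pos))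
    rw [div_eq_iff hDpos.ne', ← Real.sqrt_mul hTnn]
    have e1 : ((n₀:ℝ) + 4) ≠ 0 := ne_of_gt h0pos
    have e2 : ((n:ℝ) - 1) ≠ 0 := ne_of_gt h1pos
    have e3 : ((n:ℝ) - 2) ≠ 0 := ne_of_gt h2pos
    have e4 : (4 * (n:ℝ) + (n₀:ℝ)) ≠ 0 := by linarith
    rw [show N / (((n₀:ℝ) + 4) * ((n:ℝ) - 1) * ((n:ℝ) - 2)) *
        (4 * ((n:ℝ) - 1) * ((n₀:ℝ) + 4) / N * (4 * ((n:ℝ) - 2))) = 16 by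
      rw [hN]; field_simp; ring]
    rw [show (16:ℝ) = 4 ^ 2 by norm_num, Real.sqrt_sq (by norm_num)]
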